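/- For every n ≥ 1, there exists an NFA with exactly n + 4 states over the alphabet Σ_n = {1, 2, …, n} (allowing a set of start states, or equivalently accepting M_n as a union of the languages of two NFAs) that accepts the language M_n = M'_n ∪ M''_n. -/

import Mathlib

/-- The language `M''_n` over a linearly ordered alphabet: all words containing two
occurrences of some letter `i` with only letters strictly smaller than `i`
in between. -/
def Mpp {α : Type*} [LT α] : Set (List α) :=
  { u | ∃ (x y z : List α) (i : α), u = x ++ i :: (y ++ i :: z) ∧ ∀ c ∈ y, c < i }

namespace Stmt10Aux

open Sum

variable {n : ℕ}

def P (i : Fin n) (w : List (Fin n)) : Prop :=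
  ∃ x y : List (Fin n), w = x ++ i :: y ∧ ∀ c ∈ y, c < i

lemma P_nil (i : Fin n) : ¬ P i [] := by
  rintro ⟨x, y, h, -⟩
  have := congrArg List.length h
  simp at this

lemma P_snoc (i a : Fin n) (w : List (Fin n)) :
    P i (w ++ [a]) ↔ a = i ∨ (a < i ∧ P i w) := by
  constructor
  · rintro ⟨x, y, h, hy⟩
    rcases List.eq_nil_or_concat y with rfl | ⟨y', a', rfl⟩
    · left
      have h2 : x ++ [i] = w ++ [a] := by simpa using h.symm
      have := (List.append_inj' h2 rfl).2
      simp_all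
    · rw [List.concat_eq_append] at h hy
      right
      have h2 : (x ++ i :: y') ++ [a'] = w ++ [a] := by
        simpa using h.symm
      obtain ⟨h3, h4⟩ := List.append_inj' h2 rfl
      have ha : a' = a := by simpa using h4
      have hlt : a < i := ha ▸ hy a' (by simp)
      exact ⟨hlt, x, y', h3.symm, fun c hc => hy c (by simp [hc])⟩
  · rintro (rfl | ⟨hai, x, y, rfl, hy⟩)
    · exact ⟨w, [], by simp⟩
    · refine ⟨x, y ++ [a], by simp, fun c hc => ?_⟩
      rcases List.mem_append.mp hc with h | h
      · exact hy c h
      · simpa [List.mem_singleton.mp h] using hai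

lemma Mpp_nil : ([] : List (Fin n)) ∉ Mpp := by
  rintro ⟨x, y, z, i, h, -⟩
  have := congrArg List.length h
  simp at this

lemma Mpp_snoc (a : Fin n) (w : List (Fin n)) :
    (w ++ [a]) ∈ Mpp ↔ w ∈ Mpp ∨ P a w := by
  constructor
  · rintro ⟨x, y, z, i, h, hy⟩
    rcases List.eq_nil_or_concat z with rfl | ⟨z', a', rfl⟩
    · right
      have h2 : (x ++ i :: y) ++ [i] = w ++ [a] := by simpa using h.symm
      obtain ⟨h3, h4⟩ := List.append_inj' h2 rfl
      have : i = a := by simpa using h4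
      subst this
      exact ⟨x, y, h3.symm, hy⟩
    · left
      rw [List.concat_eq_append] at h
      have h2 : (x ++ i :: (y ++ i :: z')) ++ [a'] = w ++ [a] := by
        simpa using h.symm
      obtain ⟨h3, -⟩ := List.append_inj' h2 rfl
      exact ⟨x, y, z', i, h3.symm, hy⟩
  · rintro (⟨x, y, z, i, rfl, hy⟩ | ⟨x, y, rfl, hy⟩)
    · exact ⟨x, y, z ++ [a], i, by simp, hy⟩
    · exact ⟨x, y, [], a, by simp, hy⟩

/-! ### The NFA -/

def myStep (q : Fin n ⊕ Fin 4) (a : Fin n) : Set (Fin n ⊕ Fin 4) :=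
  match q with
  | .inl i => {x | (a < i ∧ x = .inl i) ∨ (a = i ∧ x = .inr 1)}
  | .inr j =>
    if j = 0 then {x | x = .inr 0 ∨ x = .inl a}
    else if j = 1 then {x | x = .inr 1}
    else if j = 2 then {x | x = .inr 3}
    else {x | x = .inr 2}

def myNFA (n : ℕ) : NFA (Fin n) (Fin n ⊕ Fin 4) :=
  ⟨myStep, {x | x = .inr 0 ∨ x = .inr 2}, {x | x = .inr 1 ∨ x = .inr 3}⟩

lemma eval_char (w : List (Fin n)) :
    (myNFA n).evalFrom (myNFA n).start w =
      {x | x = .inr 0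
        ∨ (x = .inr 2 ∧ Even w.length)
        ∨ (x = .inr 3 ∧ Odd w.length)
        ∨ (∃ i, x = .inl i ∧ P i w)
        ∨ (x = .inr 1 ∧ w ∈ Mpp)} := by
  induction w using List.reverseRecOn with
  | nil =>
    ext x
    simp [myNFA, NFA.evalFrom, P_nil, Mpp_nil]
  | append_singleton w a ih =>
    rw [NFA.evalFrom_append, NFA.evalFrom_singleton, ih]
    ext x
    simp only [NFA.mem_stepSet, Set.mem_setOf_eq, List.length_append,
      List.length_singleton]
    constructor
    · rintro ⟨t, (rfl | ⟨rfl, he⟩ | ⟨rfl, ho⟩ | ⟨i, rfl, hp⟩ | ⟨rfl, hm⟩), hx⟩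
      · simp only [myNFA, myStep, if_pos rfl, Set.mem_setOf_eq] at hx
        rcases hx with rfl | rfl
        · exact Or.inl rfl
        · exact Or.inr (Or.inr (Or.inr (Or.inl ⟨a, rfl, (P_snoc a a w).mpr (Or.inl rfl)⟩)))
      · have : x = Sum.inr 3 := by
          simpa [myNFA, myStep] using hx
        exact Or.inr (Or.inr (Or.inl ⟨this, by simpa using he.add_one⟩))
      · have : x = Sum.inr 2 := by
          simpa [myNFA, myStep] using hx
        exact Or.inr (Or.inl ⟨this, by simpa using ho.add_one⟩)
      · simp only [myNFA, myStep, Set.mem_setOf_eq] at hx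
        rcases hx with ⟨hai, rfl⟩ | ⟨rfl, rfl⟩
        · exact Or.inr (Or.inr (Or.inr (Or.inl ⟨i, rfl, (P_snoc i a w).mpr (Or.inr ⟨hai, hp⟩)⟩)))
        · exact Or.inr (Or.inr (Or.inr (Or.inr ⟨rfl, (Mpp_snoc a w).mpr (Or.inr hp)⟩)))
      · have : x = Sum.inr 1 := by
          simpa [myNFA, myStep] using hx
        exact Or.inr (Or.inr (Or.inr (Or.inr ⟨this, (Mpp_snoc a w).mpr (Or.inl hm)⟩)))
    · rintro (rfl | ⟨rfl, he⟩ | ⟨rfl, ho⟩ | ⟨i, rfl, hp⟩ | ⟨rfl, hm⟩)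
      · exact ⟨.inr 0, Or.inl rfl, by simp [myNFA, myStep]⟩
      · have ho' : Odd w.length := by
          rcases Nat.even_or_odd w.length with h | h
          · exact absurd (by simpa using h.add_one) (by simpa using he)
          · exact h
        exact ⟨.inr 3, Or.inr (Or.inr (Or.inl ⟨rfl, ho'⟩)), by simp [myNFA, myStep]⟩
      · have he' : Even w.length := by
          rcases Nat.even_or_odd w.length with h | h
          · exact h
          · exact absurd (by simpa using h.add_one) (by simpa using ho)
        exact ⟨.inr 2, Or.inr (Or.inl ⟨rfl, he'⟩), by simp [myNFA, myStep]⟩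
      · rcases (P_snoc i a w).mp hp with rfl | ⟨hai, hp'⟩
        · exact ⟨.inr 0, Or.inl rfl, by simp [myNFA, myStep]⟩
        · exact ⟨.inl i, Or.inr (Or.inr (Or.inr (Or.inl ⟨i, rfl, hp'⟩))),
            by simp [myNFA, myStep, hai]⟩
      · rcases (Mpp_snoc a w).mp hm with hm' | hp
        · exact ⟨.inr 1, Or.inr (Or.inr (Or.inr (Or.inr ⟨rfl, hm'⟩))),
            by simp [myNFA, myStep]⟩
        · exact ⟨.inl a, Or.inr (Or.inr (Or.inr (Or.inl ⟨a, rfl, hp⟩))),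
            by simp [myNFA, myStep]⟩

lemma myNFA_accepts (w : List (Fin n)) :
    w ∈ (myNFA n).accepts ↔ (Odd w.length ∨ w ∈ Mpp) := by
  rw [NFA.mem_accepts]
  constructor
  · rintro ⟨q, hq, hev⟩
    rw [eval_char] at hev
    rcases hq with rfl | rfl <;> simp_all [Set.mem_setOf_eq]
  · rintro (ho | hm)
    · exact ⟨.inr 3, Or.inr rfl, by rw [eval_char]; simp [ho]⟩
    · exact ⟨.inr 1, Or.inl rfl, by rw [eval_char]; simp [hm]⟩

/-! ### Transport along an equivalence of state types -/

def eNFA {α σ τ : Type*} (e : σ ≃ τ) (A : NFA α σ) : NFA α τ :=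
  ⟨fun q a => e '' A.step (e.symm q) a, e '' A.start, e '' A.accept⟩

lemma eNFA_stepSet {α σ τ : Type*} (e : σ ≃ τ) (A : NFA α σ) (S : Set σ) (a : α) :
    (eNFA e A).stepSet (e '' S) a = e '' A.stepSet S a := by
  ext x
  simp only [NFA.mem_stepSet, eNFA, Set.mem_image]
  constructor
  · rintro ⟨t, ⟨s, hs, rfl⟩, ⟨u, hu, rfl⟩⟩
    exact ⟨u, ⟨s, hs, by simpa using hu⟩, rfl⟩
  · rintro ⟨u, ⟨s, hs, hu⟩, rfl⟩
    exact ⟨e s, ⟨s, hs, rfl⟩, ⟨u, by simpa using hu, rfl⟩⟩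

lemma eNFA_evalFrom {α σ τ : Type*} (e : σ ≃ τ) (A : NFA α σ) (S : Set σ)
    (w : List α) : (eNFA e A).evalFrom (e '' S) w = e '' A.evalFrom S w := by
  induction w generalizing S with
  | nil => simp [NFA.evalFrom]
  | cons a w ih =>
    show (eNFA e A).evalFrom ((eNFA e A).stepSet (e '' S) a) w =
      e '' A.evalFrom (A.stepSet S a) w
    rw [eNFA_stepSet, ih]

lemma eNFA_accepts {α σ τ : Type*} (e : σ ≃ τ) (A : NFA α σ) (w : List α) :
    w ∈ (eNFA e A).accepts ↔ w ∈ A.accepts := by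
  rw [NFA.mem_accepts, NFA.mem_accepts]
  show (∃ q ∈ (eNFA e A).accept, q ∈ (eNFA e A).evalFrom (e '' A.start) w) ↔ _
  rw [eNFA_evalFrom]
  constructor
  · rintro ⟨q, ⟨s, hs, rfl⟩, ⟨t, ht, hts⟩⟩
    exact ⟨s, hs, by rwa [e.injective hts] at ht⟩
  · rintro ⟨s, hs, ht⟩
    exact ⟨e s, ⟨s, hs, rfl⟩, ⟨s, ht, rfl⟩⟩

end Stmt10Aux

open Stmt10Aux in
/-- There is an NFA with exactly `n + 4` states (with a set of start states) over
the `n`-letter ordered alphabet that accepts `M_n = M'_n ∪ M''_n`. -/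
theorem stmt_10 (n : ℕ) (hn : 1 ≤ n) :
    ∃ B : NFA (Fin n) (Fin (n + 4)),
      ∀ w : List (Fin n),
        w ∈ B.accepts ↔ (Odd w.length ∨ w ∈ (Mpp : Set (List (Fin n)))) := by
  refine ⟨eNFA finSumFinEquiv (myNFA n), fun w => ?_⟩
  rw [eNFA_accepts, myNFA_accepts]
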